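/- arXiv:1105.3180 — 7 statements merged into one kernel-verified Lean document; each statement's English description precedes it below -/
import Mathlib

section
/- Let k ∈ ℝ. Then 𝔼_ℙ[(e^X − e^k)₊] = ∫_0^∞ e^{−s} ℙ*({X > k + s}) ds. (This is the Carr–Madan representation: the normalized call price equals ℙ*(X − E > k) where E is an independent standard exponential random variable under ℙ*.) -/
open MeasureTheory Real Set

/-- Carr–Madan representation: the normalized call price equals
`∫_0^∞ e^{−s} ℙ*(X > k + s) ds`, i.e. `ℙ*(X − E > k)` where `E` is an independent
standard exponential random variable under the share measure `ℙ*`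
(the measure with density `e^X` with respect to `ℙ`). -/
theorem call_price_carr_madan_representation
    {Ω : Type*} [MeasurableSpace Ω] (P : Measure Ω) [IsProbabilityMeasure P]
    (X : Ω → ℝ) (hX : Measurable X)
    (hint : Integrable (fun ω => Real.exp (X ω)) P)
    (hmean : ∫ ω, Real.exp (X ω) ∂P = 1) (k : ℝ) :
    ∫ ω, max (Real.exp (X ω) - Real.exp k) 0 ∂P
      = ∫ s in Set.Ioi (0 : ℝ), Real.exp (-s) *
          ((P.withDensity fun ω => ENNReal.ofReal (Real.exp (X ω)))
            {ω | k + s < X ω}).toReal := by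
  set μ := P.withDensity fun ω => ENNReal.ofReal (Real.exp (X ω)) with hμdef
  have hXe : Measurable fun ω => ENNReal.ofReal (Real.exp (X ω)) :=
    (Real.measurable_exp.comp hX).ennreal_ofReal
  have hset : ∀ s : ℝ, MeasurableSet {ω | k + s < X ω} := fun s =>
    measurableSet_lt measurable_const hX
  have htot : ∫⁻ ω, ENNReal.ofReal (Real.exp (X ω)) ∂P < ⊤ := hint.lintegral_lt_top
  have hfin : ∀ s : ℝ, μ {ω | k + s < X ω} < ⊤ := by
    intro s
    calc μ {ω | k + s < X ω} ≤ μ univ := measure_mono (subset_univ _)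
      _ = ∫⁻ ω, ENNReal.ofReal (Real.exp (X ω)) ∂P := by
          rw [hμdef, withDensity_apply _ MeasurableSet.univ, Measure.restrict_univ]
      _ < ⊤ := htot
  -- the two-variable kernel
  set g : ℝ → Ω → ENNReal := fun s ω =>
    ENNReal.ofReal (Real.exp (-s)) *
      (if k + s < X ω then ENNReal.ofReal (Real.exp (X ω)) else 0) with hgdef
  have hgmeas : Measurable (Function.uncurry g) := by
    apply Measurable.mul
    · exact (Real.measurable_exp.comp measurable_neg).ennreal_ofReal.comp measurable_fst
    · apply Measurable.ite
      · exact measurableSet_lt (measurable_const.add measurable_fst) (hX.comp measurable_snd)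
      · exact hXe.comp measurable_snd
      · exact measurable_const
  -- rewrite μ of the sets as a lintegral
  have hμset : ∀ s : ℝ, ENNReal.ofReal (Real.exp (-s)) * μ {ω | k + s < X ω}
      = ∫⁻ ω, g s ω ∂P := by
    intro s
    rw [hμdef, withDensity_apply _ (hset s), ← lintegral_indicator (hset s) _,
      ← lintegral_const_mul _ (Measurable.indicator hXe (hset s))]
    refine lintegral_congr fun ω => ?_
    simp only [hgdef, Set.indicator_apply, Set.mem_setOf_eq]
  -- the inner integral for fixed ω
  have inner : ∀ ω : Ω, (∫⁻ s in Ioi (0:ℝ), g s ω)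
      = ENNReal.ofReal (max (Real.exp (X ω) - Real.exp k) 0) := by
    intro ω
    rcases le_or_gt (X ω) k with h | h
    · have h0 : ∀ s ∈ Ioi (0:ℝ), g s ω = 0 := by
        intro s hs
        have hns : ¬ (k + s < X ω) := by
          push_neg
          linarith [mem_Ioi.mp hs]
        simp [hgdef, hns]
      rw [setLIntegral_congr_fun measurableSet_Ioi h0]
      have hle : Real.exp (X ω) - Real.exp k ≤ 0 := by
        have := Real.exp_le_exp.mpr h
        linarith
      simp [max_eq_right hle]
    · set c := X ω - k with hcdef
      have hc : 0 < c := by rw [hcdef]; linarith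
      have hind : ∀ s : ℝ, g s ω = (Iio c).indicator
          (fun s => ENNReal.ofReal (Real.exp (-s)) * ENNReal.ofReal (Real.exp (X ω))) s := by
        intro s
        by_cases hs : s < c
        · have hlt : k + s < X ω := by rw [hcdef] at hs; linarith
          simp [hgdef, hlt, Set.indicator_of_mem (mem_Iio.mpr hs)]
        · have hnlt : ¬ (k + s < X ω) := by
            push_neg at hs ⊢; rw [hcdef] at hs; linarith
          simp [hgdef, hnlt, Set.indicator_of_notMem (fun h' => hs (mem_Iio.mp h'))]
      calc (∫⁻ s in Ioi (0:ℝ), g s ω)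
          = ∫⁻ s in Ioi (0:ℝ), (Iio c).indicator
              (fun s => ENNReal.ofReal (Real.exp (-s)) * ENNReal.ofReal (Real.exp (X ω))) s :=
            lintegral_congr fun s => hind s
        _ = ∫⁻ s in Ioo (0:ℝ) c,
              ENNReal.ofReal (Real.exp (-s)) * ENNReal.ofReal (Real.exp (X ω)) := by
            rw [lintegral_indicator measurableSet_Iio _,
              Measure.restrict_restrict measurableSet_Iio, Set.Iio_inter_Ioi]
        _ = (∫⁻ s in Ioo (0:ℝ) c, ENNReal.ofReal (Real.exp (-s)))
              * ENNReal.ofReal (Real.exp (X ω)) :=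
            lintegral_mul_const _ ((Real.measurable_exp.comp measurable_neg).ennreal_ofReal)
        _ = ENNReal.ofReal (1 - Real.exp (-c)) * ENNReal.ofReal (Real.exp (X ω)) := by
            congr 1
            have hi : IntegrableOn (fun s => Real.exp (-s)) (Ioo (0:ℝ) c) := by
              have := (Continuous.intervalIntegrable (μ := volume) (Real.continuous_exp.comp continuous_neg) 0 c).1
              exact this.mono_set Ioo_subset_Ioc_self
            rw [← ofReal_integral_eq_lintegral_ofReal hi
              (Filter.Eventually.of_forall fun s => (Real.exp_pos _).le)]
            congr 1
            have h1 : ∫ s in Ioo (0:ℝ) c, Real.exp (-s) = ∫ s in (0:ℝ)..c, Real.exp (-s) := by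
              rw [intervalIntegral.integral_of_le hc.le,
                MeasureTheory.integral_Ioc_eq_integral_Ioo]
            rw [h1, intervalIntegral.integral_comp_neg fun x => Real.exp x, integral_exp]
            simp
        _ = ENNReal.ofReal (max (Real.exp (X ω) - Real.exp k) 0) := by
            have he : Real.exp (-c) < 1 := by
              rw [Real.exp_lt_one_iff]; linarith
            rw [← ENNReal.ofReal_mul (by linarith)]
            congr 1
            have hmax : max (Real.exp (X ω) - Real.exp k) 0 = Real.exp (X ω) - Real.exp k :=
              max_eq_left (by have := Real.exp_lt_exp.mpr h; linarith)
            have hek : Real.exp (-c) * Real.exp (X ω) = Real.exp k := by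
              rw [← Real.exp_add]; congr 1; rw [hcdef]; ring
            rw [hmax, sub_mul, one_mul, hek]
  -- Tonelli swap and key identity
  have key : (∫⁻ s in Ioi (0:ℝ), ENNReal.ofReal (Real.exp (-s)) * μ {ω | k + s < X ω})
      = ∫⁻ ω, ENNReal.ofReal (max (Real.exp (X ω) - Real.exp k) 0) ∂P :=
    calc (∫⁻ s in Ioi (0:ℝ), ENNReal.ofReal (Real.exp (-s)) * μ {ω | k + s < X ω})
        = ∫⁻ s in Ioi (0:ℝ), ∫⁻ ω, g s ω ∂P := lintegral_congr fun s => hμset s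
      _ = ∫⁻ ω, (∫⁻ s in Ioi (0:ℝ), g s ω) ∂P :=
          lintegral_lintegral_swap hgmeas.aemeasurable
      _ = ∫⁻ ω, ENNReal.ofReal (max (Real.exp (X ω) - Real.exp k) 0) ∂P :=
          lintegral_congr fun ω => inner ω
  -- convert both Bochner integrals to lower integrals
  have hmono : Antitone fun s : ℝ => (μ {ω | k + s < X ω}).toReal := by
    intro s t hst
    refine ENNReal.toReal_mono (hfin s).ne (measure_mono fun ω hω => ?_)
    simp only [Set.mem_setOf_eq] at hω ⊢
    linarith
  have hrhsmeas : Measurable fun s => Real.exp (-s) * (μ {ω | k + s < X ω}).toReal :=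
    (Real.measurable_exp.comp measurable_neg).mul hmono.measurable
  have hrhs : ∫ s in Ioi (0:ℝ), Real.exp (-s) * (μ {ω | k + s < X ω}).toReal
      = (∫⁻ s in Ioi (0:ℝ), ENNReal.ofReal (Real.exp (-s)) * μ {ω | k + s < X ω}).toReal := by
    rw [integral_eq_lintegral_of_nonneg_ae
      (Filter.Eventually.of_forall fun s => by positivity)
      hrhsmeas.aestronglyMeasurable]
    congr 1
    refine lintegral_congr fun s => ?_
    rw [ENNReal.ofReal_mul (Real.exp_pos _).le, ENNReal.ofReal_toReal (hfin s).ne]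
  have hlhsmeas : Measurable fun ω => max (Real.exp (X ω) - Real.exp k) 0 :=
    ((Real.measurable_exp.comp hX).sub measurable_const).max measurable_const
  rw [integral_eq_lintegral_of_nonneg_ae (f := fun ω => max (Real.exp (X ω) - Real.exp k) 0)
    (Filter.Eventually.of_forall fun ω => le_max_right _ _) hlhsmeas.aestronglyMeasurable,
    hrhs, key]
end

section
/- Let f : ℝ → [0, ∞] be Borel measurable and y > 0. Then ∫_{x=0}^{y} ∫_{u=y−x}^{y} f(u) f(x) du dx = 2 ∫_{x=0}^{y/2} ∫_{u=y−x}^{y} f(u) f(x) du dx + (∫_{y/2}^{y} f(u) du)². (Splitting of the double integral appearing in the second-order coefficient d₂, using the symmetry of the integrand f(u)f(x) about the line u = x.) -/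
open MeasureTheory Set ENNReal

/-- Splitting of the double integral appearing in the second-order coefficient `d₂`,
using the symmetry of the integrand `f(u) f(x)` about the line `u = x`:
`∫_{x=0}^{y} ∫_{u=y−x}^{y} f(u) f(x) du dx
  = 2 ∫_{x=0}^{y/2} ∫_{u=y−x}^{y} f(u) f(x) du dx + (∫_{y/2}^{y} f(u) du)²`. -/
theorem double_integral_symmetry_split
    (f : ℝ → ℝ≥0∞) (hf : Measurable f) (y : ℝ) (hy : 0 < y) :
    ∫⁻ x in Set.Ioo (0 : ℝ) y, ∫⁻ u in Set.Ioo (y - x) y, f u * f x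
      = 2 * (∫⁻ x in Set.Ioo (0 : ℝ) (y / 2), ∫⁻ u in Set.Ioo (y - x) y, f u * f x)
        + (∫⁻ u in Set.Ioo (y / 2) y, f u) ^ 2 := by
  have h2 : (0:ℝ) < y / 2 := by linarith
  have h2y : y / 2 < y := by linarith
  set S : Set (ℝ × ℝ) := {p : ℝ × ℝ | p.1 ∈ Ioo (0:ℝ) (y/2) ∧ p.2 ∈ Ioo (y - p.1) y} with hS_def
  have hS : MeasurableSet S := by
    have : S = (Prod.fst ⁻¹' Ioo (0:ℝ) (y/2)) ∩
        ({p : ℝ × ℝ | y - p.1 < p.2} ∩ (Prod.snd ⁻¹' Iio y)) := by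
      ext p; simp [hS_def, Set.mem_Ioo, and_assoc]
    rw [this]
    exact (measurable_fst measurableSet_Ioo).inter
      ((measurableSet_lt (measurable_const.sub measurable_fst) measurable_snd).inter
        (measurable_snd measurableSet_Iio))
  set g : ℝ → ℝ → ℝ≥0∞ := fun x u => S.indicator (fun p => f p.1 * f p.2) (x, u) with hg_def
  have hg : Measurable (Function.uncurry g) := by
    have : Function.uncurry g = S.indicator (fun p => f p.1 * f p.2) := rfl
    rw [this]
    exact ((hf.comp measurable_fst).mul (hf.comp measurable_snd)).indicator hS
  have hR : ∫⁻ x, ∫⁻ u, g x u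
      = ∫⁻ x in Set.Ioo (0 : ℝ) (y / 2), ∫⁻ u in Set.Ioo (y - x) y, f u * f x := by
    rw [← lintegral_indicator measurableSet_Ioo]
    congr 1
    ext x
    by_cases hx : x ∈ Ioo (0:ℝ) (y/2)
    · rw [Set.indicator_of_mem hx]
      have h1 : ∀ u, g x u = (Ioo (y - x) y).indicator (fun u => f u * f x) u := by
        intro u
        simp only [hg_def, hS_def, Set.indicator_apply, Set.mem_setOf_eq, Set.mem_Ioo]
        obtain ⟨hx1, hx2⟩ := hx
        split_ifs with h h' h''
        · ring
        · exact absurd h.2 h'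
        · exact absurd ⟨⟨hx1, hx2⟩, h''⟩ h
        · rfl
      simp_rw [h1]
      rw [lintegral_indicator measurableSet_Ioo]
    · rw [Set.indicator_of_notMem hx]
      have h1 : ∀ u, g x u = 0 := by
        intro u
        simp only [hg_def, hS_def, Set.indicator_apply, Set.mem_setOf_eq]
        rw [if_neg]; rintro ⟨a, b⟩; exact hx a
      simp [h1]
  have hL : ∫⁻ u, ∫⁻ x, g x u
      = ∫⁻ x in Set.Ioo (y/2) y, ∫⁻ u in Set.Ioo (y - x) (y/2), f u * f x := by
    rw [← lintegral_indicator measurableSet_Ioo]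
    congr 1
    ext u
    by_cases hu : u ∈ Ioo (y/2) y
    · rw [Set.indicator_of_mem hu]
      obtain ⟨hu1, hu2⟩ := hu
      have h1 : ∀ x, g x u = (Ioo (y - u) (y/2)).indicator (fun x => f x * f u) x := by
        intro x
        simp only [hg_def, hS_def, Set.indicator_apply, Set.mem_setOf_eq, Set.mem_Ioo]
        split_ifs with h h' h''
        · rfl
        · exact absurd ⟨by linarith [h.2.1], h.1.2⟩ h'
        · obtain ⟨a1, a2⟩ := h''
          exact absurd ⟨⟨by linarith, a2⟩, by constructor <;> linarith⟩ h
        · rfl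
      simp_rw [h1]
      rw [lintegral_indicator measurableSet_Ioo]
    · rw [Set.indicator_of_notMem hu]
      have h1 : ∀ x, g x u = 0 := by
        intro x
        simp only [hg_def, hS_def, Set.indicator_apply, Set.mem_setOf_eq, Set.mem_Ioo]
        rw [if_neg]
        rintro ⟨⟨a1, a2⟩, b1, b2⟩
        exact hu ⟨by linarith, b2⟩
      simp [h1]
  have key : ∫⁻ x in Set.Ioo (y/2) y, ∫⁻ u in Set.Ioo (y - x) (y/2), f u * f x
      = ∫⁻ x in Set.Ioo (0 : ℝ) (y / 2), ∫⁻ u in Set.Ioo (y - x) y, f u * f x := by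
    rw [← hL, ← hR, lintegral_lintegral_swap hg.aemeasurable]
  have hdisj : ∀ a b c : ℝ, Disjoint (Ioo a b) (Ico b c) := by
    intro a b c
    rw [Set.disjoint_left]
    rintro p ⟨_, h1⟩ ⟨h2, _⟩
    exact absurd h1 (not_lt.2 h2)
  have hsplit : Ioo (0:ℝ) y = Ioo 0 (y/2) ∪ Ico (y/2) y :=
    (Set.Ioo_union_Ico_eq_Ioo h2 h2y.le).symm
  set C := ∫⁻ u in Ioo (y/2) y, f u with hC
  rw [hsplit, lintegral_union measurableSet_Ico (hdisj _ _ _)]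
  have hIco : ∫⁻ x in Ico (y/2) y, ∫⁻ u in Set.Ioo (y - x) y, f u * f x
      = ∫⁻ x in Ioo (y/2) y, ∫⁻ u in Set.Ioo (y - x) y, f u * f x :=
    setLIntegral_congr (Ioo_ae_eq_Ico (a := y/2) (b := y)).symm
  rw [hIco]
  have hinner : ∫⁻ x in Ioo (y/2) y, ∫⁻ u in Set.Ioo (y - x) y, f u * f x
      = (∫⁻ x in Ioo (y/2) y, ∫⁻ u in Set.Ioo (y - x) (y/2), f u * f x) + C ^ 2 := by
    have step1 : ∀ x ∈ Ioo (y/2) y,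
        ∫⁻ u in Set.Ioo (y - x) y, f u * f x
        = (∫⁻ u in Set.Ioo (y - x) (y/2), f u * f x) + C * f x := by
      rintro x ⟨hx1, hx2⟩
      have heq : Ioo (y - x) y = Ioo (y - x) (y/2) ∪ Ico (y/2) y :=
        (Set.Ioo_union_Ico_eq_Ioo (by linarith) h2y.le).symm
      rw [heq, lintegral_union measurableSet_Ico (hdisj _ _ _)]
      congr 1
      rw [show (∫⁻ u in Ico (y/2) y, f u * f x) = ∫⁻ u in Ioo (y/2) y, f u * f x from
        setLIntegral_congr (Ioo_ae_eq_Ico (a := y/2) (b := y)).symm]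
      rw [lintegral_mul_const _ hf]
    rw [setLIntegral_congr_fun measurableSet_Ioo step1]
    rw [lintegral_add_right _ (hf.const_mul _)]
    congr 1
    rw [lintegral_const_mul _ hf, hC, sq]
  rw [hinner, key]
  ring
end

section
/- Let f : ℝ → [0, ∞] be Borel measurable and y > 0, and set M := sup_{u ∈ (y/2, y)} f(u). Then ∫_{x=0}^{y} ∫_{u=y−x}^{y} f(u) f(x) du dx ≤ 2 M ∫_{0}^{y/2} x f(x) dx + ((y/2) · M)². In particular, if M < ∞ and ∫_{0}^{y/2} x f(x) dx < ∞, then this double integral is finite. -/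
open MeasureTheory Set ENNReal Function

private lemma aux_double_integral_bound
    (f : ℝ → ℝ≥0∞) (hf : Measurable f) (y : ℝ) (hy : 0 < y)
    (M : ℝ≥0∞) (hM : ∀ u ∈ Set.Ioo (y / 2) y, f u ≤ M) (hMtop : M ≠ ⊤) :
    (∫⁻ x in Set.Ioo (0 : ℝ) y, ∫⁻ u in Set.Ioo (y - x) y, f u * f x)
      ≤ 2 * M * (∫⁻ x in Set.Ioo (0 : ℝ) (y / 2), ENNReal.ofReal x * f x)
        + (ENNReal.ofReal (y / 2) * M) ^ 2 := by
  set I := ∫⁻ x in Set.Ioo (0 : ℝ) (y / 2), ENNReal.ofReal x * f x with hIdef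
  have hy2 : 0 < y / 2 := by linarith
  -- split the outer domain
  have hsplit : Set.Ioo (0 : ℝ) y = Set.Ioo 0 (y / 2) ∪ Set.Ico (y / 2) y :=
    (Set.Ioo_union_Ico_eq_Ioo hy2 (by linarith)).symm
  have hdisj : Disjoint (Set.Ioo (0:ℝ) (y/2)) (Set.Ico (y/2) y) := by
    apply Set.disjoint_left.2
    rintro x ⟨_, h2⟩ ⟨h3, _⟩; linarith
  rw [hsplit, lintegral_union measurableSet_Ico hdisj]
  -- the Ico piece equals the Ioo piece
  have hIco : (∫⁻ x in Set.Ico (y/2) y, ∫⁻ u in Set.Ioo (y - x) y, f u * f x)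
      = ∫⁻ x in Set.Ioo (y/2) y, ∫⁻ u in Set.Ioo (y - x) y, f u * f x :=
    (setLIntegral_congr Ioo_ae_eq_Ico).symm
  rw [hIco]
  -- Part 1
  have h1 : (∫⁻ x in Set.Ioo (0:ℝ) (y/2), ∫⁻ u in Set.Ioo (y - x) y, f u * f x) ≤ M * I := by
    have hb : ∀ x ∈ Set.Ioo (0:ℝ) (y/2),
        (∫⁻ u in Set.Ioo (y - x) y, f u * f x) ≤ M * (ENNReal.ofReal x * f x) := by
      intro x hx
      calc (∫⁻ u in Set.Ioo (y - x) y, f u * f x)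
          ≤ ∫⁻ _ in Set.Ioo (y - x) y, M * f x := by
            apply setLIntegral_mono measurable_const
            intro u hu
            exact mul_le_mul_left (hM u ⟨by linarith [hx.2, hu.1], hu.2⟩) _
        _ = M * f x * volume (Set.Ioo (y - x) y) := setLIntegral_const _ _
        _ = M * (ENNReal.ofReal x * f x) := by
            rw [Real.volume_Ioo, show y - (y - x) = x by ring]
            ring
    calc (∫⁻ x in Set.Ioo (0:ℝ) (y/2), ∫⁻ u in Set.Ioo (y - x) y, f u * f x)
        ≤ ∫⁻ x in Set.Ioo (0:ℝ) (y/2), M * (ENNReal.ofReal x * f x) :=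
          lintegral_mono_ae ((ae_restrict_iff' measurableSet_Ioo).2 (ae_of_all _ hb))
      _ = M * I := lintegral_const_mul M (by fun_prop)
  -- Part 2
  have h2 : (∫⁻ x in Set.Ioo (y/2) y, ∫⁻ u in Set.Ioo (y - x) y, f u * f x)
      ≤ M * I + (ENNReal.ofReal (y / 2) * M) ^ 2 := by
    -- pointwise bound for the inner integral
    have hb : ∀ x ∈ Set.Ioo (y/2) y,
        (∫⁻ u in Set.Ioo (y - x) y, f u * f x)
          ≤ M * (∫⁻ u in Set.Ioo (y - x) (y/2), f u) + M * M * ENNReal.ofReal (y/2) := by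
      intro x hx
      have hx1 : y - x < y / 2 := by linarith [hx.1]
      have hsplit2 : Set.Ioo (y - x) y = Set.Ioo (y - x) (y/2) ∪ Set.Ico (y/2) y :=
        (Set.Ioo_union_Ico_eq_Ioo hx1 (by linarith)).symm
      have hdisj2 : Disjoint (Set.Ioo (y - x) (y/2)) (Set.Ico (y/2) y) := by
        apply Set.disjoint_left.2
        rintro u ⟨_, h2⟩ ⟨h3, _⟩; linarith
      calc (∫⁻ u in Set.Ioo (y - x) y, f u * f x)
          ≤ ∫⁻ u in Set.Ioo (y - x) y, f u * M := by
            apply setLIntegral_mono (hf.mul measurable_const)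
            intro u _
            exact mul_le_mul_right (hM x hx) _
        _ = (∫⁻ u in Set.Ioo (y - x) y, f u) * M := lintegral_mul_const M hf
        _ = ((∫⁻ u in Set.Ioo (y - x) (y/2), f u) + ∫⁻ u in Set.Ico (y/2) y, f u) * M := by
            rw [hsplit2, lintegral_union measurableSet_Ico hdisj2]
        _ ≤ ((∫⁻ u in Set.Ioo (y - x) (y/2), f u) + M * ENNReal.ofReal (y/2)) * M := by
            gcongr
            calc (∫⁻ u in Set.Ico (y/2) y, f u)
                = ∫⁻ u in Set.Ioo (y/2) y, f u := (setLIntegral_congr Ioo_ae_eq_Ico).symm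
              _ ≤ ∫⁻ _ in Set.Ioo (y/2) y, M :=
                  setLIntegral_mono measurable_const (fun u hu => hM u hu)
              _ = M * volume (Set.Ioo (y/2) y) := setLIntegral_const _ _
              _ = M * ENNReal.ofReal (y/2) := by
                  rw [Real.volume_Ioo, show y - y/2 = y/2 by ring]
        _ = M * (∫⁻ u in Set.Ioo (y - x) (y/2), f u) + M * M * ENNReal.ofReal (y/2) := by
            ring
    -- Tonelli: the swapped integral
    set F : ℝ → ℝ → ℝ≥0∞ := fun x u => (Set.Ioi (y - x)).indicator f u with hFdef
    have hFmeas : AEMeasurable (uncurry F)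
        ((volume.restrict (Set.Ioo (y/2) y)).prod (volume.restrict (Set.Ioo (0:ℝ) (y/2)))) := by
      have : uncurry F = Set.indicator {p : ℝ × ℝ | y - p.1 < p.2} (fun p => f p.2) := by
        funext p
        simp only [uncurry, hFdef, Set.indicator, Set.mem_Ioi, Set.mem_setOf_eq]
      rw [this]
      exact ((hf.comp measurable_snd).indicator
        (measurableSet_lt (measurable_const.sub measurable_fst) measurable_snd)).aemeasurable
    have hswap : (∫⁻ x in Set.Ioo (y/2) y, ∫⁻ u in Set.Ioo (0:ℝ) (y/2), F x u)
        = ∫⁻ u in Set.Ioo (0:ℝ) (y/2), ∫⁻ x in Set.Ioo (y/2) y, F x u :=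
      lintegral_lintegral_swap hFmeas
    have hT : (∫⁻ x in Set.Ioo (y/2) y, ∫⁻ u in Set.Ioo (y - x) (y/2), f u) ≤ I := by
      have e1 : (∫⁻ x in Set.Ioo (y/2) y, ∫⁻ u in Set.Ioo (y - x) (y/2), f u)
          = ∫⁻ x in Set.Ioo (y/2) y, ∫⁻ u in Set.Ioo (0:ℝ) (y/2), F x u := by
        apply setLIntegral_congr_fun measurableSet_Ioo
        intro x hx
        beta_reduce
        simp only [hFdef]
        rw [lintegral_indicator measurableSet_Ioi, Measure.restrict_restrict measurableSet_Ioi]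
        have : Set.Ioi (y - x) ∩ Set.Ioo (0:ℝ) (y/2) = Set.Ioo (y - x) (y/2) := by
          ext u
          simp only [Set.mem_inter_iff, Set.mem_Ioi, Set.mem_Ioo]
          constructor
          · rintro ⟨h1, _, h3⟩; exact ⟨h1, h3⟩
          · rintro ⟨h1, h2⟩; exact ⟨h1, by linarith [hx.2], h2⟩
        rw [this]
      have e2 : (∫⁻ u in Set.Ioo (0:ℝ) (y/2), ∫⁻ x in Set.Ioo (y/2) y, F x u) = I := by
        rw [hIdef]
        apply setLIntegral_congr_fun measurableSet_Ioo
        intro u hu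
        beta_reduce
        have hx2 : (fun x => F x u) = (Set.Ioi (y - u)).indicator (fun _ => f u) := by
          funext x
          simp only [hFdef, Set.indicator, Set.mem_Ioi]
          by_cases h : y - x < u
          · rw [if_pos h, if_pos (by linarith)]
          · rw [if_neg h, if_neg (by intro h'; exact h (by linarith))]
        rw [hx2, lintegral_indicator measurableSet_Ioi,
          Measure.restrict_restrict measurableSet_Ioi, setLIntegral_const]
        have : Set.Ioi (y - u) ∩ Set.Ioo (y/2) y = Set.Ioo (y - u) y := by
          ext x
          simp only [Set.mem_inter_iff, Set.mem_Ioi, Set.mem_Ioo]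
          constructor
          · rintro ⟨h1, _, h3⟩; exact ⟨h1, h3⟩
          · rintro ⟨h1, h2⟩; exact ⟨h1, by linarith [hu.2], h2⟩
        rw [this, Real.volume_Ioo, show y - (y - u) = u by ring, mul_comm]
      rw [e1, hswap, e2]
    calc (∫⁻ x in Set.Ioo (y/2) y, ∫⁻ u in Set.Ioo (y - x) y, f u * f x)
        ≤ ∫⁻ x in Set.Ioo (y/2) y,
            (M * (∫⁻ u in Set.Ioo (y - x) (y/2), f u) + M * M * ENNReal.ofReal (y/2)) :=
          lintegral_mono_ae ((ae_restrict_iff' measurableSet_Ioo).2 (ae_of_all _ hb))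
      _ = (∫⁻ x in Set.Ioo (y/2) y, M * (∫⁻ u in Set.Ioo (y - x) (y/2), f u))
            + (M * M * ENNReal.ofReal (y/2)) * volume (Set.Ioo (y/2) y) := by
          rw [lintegral_add_right _ measurable_const, setLIntegral_const]
      _ = M * (∫⁻ x in Set.Ioo (y/2) y, ∫⁻ u in Set.Ioo (y - x) (y/2), f u)
            + (M * M * ENNReal.ofReal (y/2)) * ENNReal.ofReal (y/2) := by
          rw [lintegral_const_mul' _ _ hMtop, Real.volume_Ioo, show y - y/2 = y/2 by ring]
      _ ≤ M * I + (ENNReal.ofReal (y/2) * M) ^ 2 :=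
          add_le_add (mul_le_mul_right hT M) (le_of_eq (by ring))
  calc _ ≤ M * I + (M * I + (ENNReal.ofReal (y/2) * M) ^ 2) := add_le_add h1 h2
    _ = 2 * M * (∫⁻ x in Set.Ioo (0 : ℝ) (y / 2), ENNReal.ofReal x * f x)
        + (ENNReal.ofReal (y / 2) * M) ^ 2 := by rw [hIdef]; ring

/-- Bound on the double integral appearing in the second-order coefficient `d₂`. -/
theorem double_integral_bound_and_finiteness
    (f : ℝ → ℝ≥0∞) (hf : Measurable f) (y : ℝ) (hy : 0 < y) :
    (∫⁻ x in Set.Ioo (0 : ℝ) y, ∫⁻ u in Set.Ioo (y - x) y, f u * f x)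
      ≤ 2 * (⨆ u ∈ Set.Ioo (y / 2) y, f u)
          * (∫⁻ x in Set.Ioo (0 : ℝ) (y / 2), ENNReal.ofReal x * f x)
        + (ENNReal.ofReal (y / 2) * (⨆ u ∈ Set.Ioo (y / 2) y, f u)) ^ 2
    ∧ ((⨆ u ∈ Set.Ioo (y / 2) y, f u) < ⊤ →
        (∫⁻ x in Set.Ioo (0 : ℝ) (y / 2), ENNReal.ofReal x * f x) < ⊤ →
        (∫⁻ x in Set.Ioo (0 : ℝ) y, ∫⁻ u in Set.Ioo (y - x) y, f u * f x) < ⊤) := by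
  set M := ⨆ u ∈ Set.Ioo (y / 2) y, f u with hMdef
  set I := ∫⁻ x in Set.Ioo (0 : ℝ) (y / 2), ENNReal.ofReal x * f x with hIdef
  have hM : ∀ u ∈ Set.Ioo (y / 2) y, f u ≤ M := fun u hu => le_biSup f hu
  have hy2 : 0 < y / 2 := by linarith
  have key : (∫⁻ x in Set.Ioo (0 : ℝ) y, ∫⁻ u in Set.Ioo (y - x) y, f u * f x)
      ≤ 2 * M * I + (ENNReal.ofReal (y / 2) * M) ^ 2 := by
    by_cases hMtop : M = ⊤
    · have : (ENNReal.ofReal (y / 2) * M) ^ 2 = ⊤ := by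
        rw [hMtop, ENNReal.mul_top (by simp [ENNReal.ofReal_eq_zero]; linarith)]
        simp
      rw [this]
      simp
    · exact aux_double_integral_bound f hf y hy M hM hMtop
  refine ⟨key, fun hMlt hIlt => lt_of_le_of_lt key ?_⟩
  have h1 : 2 * M * I < ⊤ := ENNReal.mul_lt_top (ENNReal.mul_lt_top (by simp) hMlt) hIlt
  have h2 : (ENNReal.ofReal (y / 2) * M) ^ 2 < ⊤ :=
    ENNReal.pow_lt_top (ENNReal.mul_lt_top ENNReal.ofReal_lt_top hMlt)
  exact ENNReal.add_lt_top.2 ⟨h1, h2⟩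
end

section
/- Let f : ℝ → [0, ∞] be Borel measurable and y > 0. Then ∫_{x=y}^{∞} ∫_{u=−∞}^{y−x} f(u) f(x) du dx ≤ (sup_{x > y} f(x)) · ∫_{−1}^{0} (−u) f(u) du + (∫_{−∞}^{−1} f(u) du) · (∫_{y}^{∞} f(x) dx). In particular, if sup_{x>y} f(x) < ∞, ∫_{−1}^{0} (−u) f(u) du < ∞, ∫_{−∞}^{−1} f(u) du < ∞ and ∫_{y}^{∞} f(x) dx < ∞, then this double integral is finite. -/
open MeasureTheory Set ENNReal

/-- Bound on the second double integral appearing in the second-order coefficient `d₂`: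
`∫_{x=y}^{∞} ∫_{u=−∞}^{y−x} f(u) f(x) du dx
  ≤ (sup_{x>y} f(x)) ∫_{−1}^{0} (−u) f(u) du + (∫_{−∞}^{−1} f(u) du)(∫_{y}^{∞} f(x) dx)`;
in particular, if all quantities on the right-hand side are finite, then so is
the double integral. -/
theorem double_integral_tail_bound_and_finiteness
    (f : ℝ → ℝ≥0∞) (hf : Measurable f) (y : ℝ) (hy : 0 < y) :
    (∫⁻ x in Set.Ioi y, ∫⁻ u in Set.Iio (y - x), f u * f x)
      ≤ (⨆ x ∈ Set.Ioi y, f x) * (∫⁻ u in Set.Ioo (-1 : ℝ) 0, ENNReal.ofReal (-u) * f u)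
        + (∫⁻ u in Set.Iio (-1 : ℝ), f u) * (∫⁻ x in Set.Ioi y, f x)
    ∧ ((⨆ x ∈ Set.Ioi y, f x) < ⊤ →
        (∫⁻ u in Set.Ioo (-1 : ℝ) 0, ENNReal.ofReal (-u) * f u) < ⊤ →
        (∫⁻ u in Set.Iio (-1 : ℝ), f u) < ⊤ →
        (∫⁻ x in Set.Ioi y, f x) < ⊤ →
        (∫⁻ x in Set.Ioi y, ∫⁻ u in Set.Iio (y - x), f u * f x) < ⊤) := by
  set S := ⨆ x ∈ Set.Ioi y, f x with hS
  set F : ℝ → ℝ → ℝ≥0∞ := fun x u => (Set.Iio (y - x)).indicator f u with hF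
  have hFunc : Function.uncurry F =
      Set.indicator {p : ℝ × ℝ | p.2 < y - p.1} (f ∘ Prod.snd) := by
    ext p
    simp only [Function.uncurry, hF, Set.indicator, Set.mem_Iio, Set.mem_setOf_eq,
      Function.comp]
  have hFmeas : Measurable (Function.uncurry F) := by
    rw [hFunc]
    exact (hf.comp measurable_snd).indicator
      (measurableSet_lt measurable_snd (measurable_const.sub measurable_fst))
  -- step 1: pointwise bound on inner integral
  have h1 : ∀ x ∈ Set.Ioi y, (∫⁻ u in Set.Iio (y - x), f u)
      ≤ (∫⁻ u in Set.Iio (-1 : ℝ), f u) + ∫⁻ u in Set.Ioo (-1 : ℝ) 0, F x u := by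
    intro x hx
    have hyx : y - x < 0 := by simp at hx; linarith
    have hsub : Set.Iio (y - x) ⊆ Set.Iic (-1 : ℝ) ∪ (Set.Ioo (-1 : ℝ) 0 ∩ Set.Iio (y - x)) := by
      intro u hu
      simp only [Set.mem_Iio] at hu
      rcases le_or_gt u (-1) with h | h
      · exact Or.inl h
      · exact Or.inr ⟨⟨h, by linarith⟩, hu⟩
    calc (∫⁻ u in Set.Iio (y - x), f u)
        ≤ ∫⁻ u in Set.Iic (-1 : ℝ) ∪ (Set.Ioo (-1 : ℝ) 0 ∩ Set.Iio (y - x)), f u :=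
          lintegral_mono_set hsub
      _ ≤ (∫⁻ u in Set.Iic (-1 : ℝ), f u)
            + ∫⁻ u in Set.Ioo (-1 : ℝ) 0 ∩ Set.Iio (y - x), f u := lintegral_union_le _ _ _
      _ = (∫⁻ u in Set.Iio (-1 : ℝ), f u) + ∫⁻ u in Set.Ioo (-1 : ℝ) 0, F x u := by
          rw [← Measure.restrict_congr_set Iio_ae_eq_Iic]
          congr 1
          simp only [hF]
          rw [lintegral_indicator measurableSet_Iio, Measure.restrict_restrict measurableSet_Iio,
            Set.inter_comm]
  -- main bound
  have hbound : (∫⁻ x in Set.Ioi y, ∫⁻ u in Set.Iio (y - x), f u * f x)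
      ≤ S * (∫⁻ u in Set.Ioo (-1 : ℝ) 0, ENNReal.ofReal (-u) * f u)
        + (∫⁻ u in Set.Iio (-1 : ℝ), f u) * (∫⁻ x in Set.Ioi y, f x) := by
    calc (∫⁻ x in Set.Ioi y, ∫⁻ u in Set.Iio (y - x), f u * f x)
        = ∫⁻ x in Set.Ioi y, (∫⁻ u in Set.Iio (y - x), f u) * f x := by
          refine setLIntegral_congr_fun measurableSet_Ioi (fun x hx => ?_)
          exact lintegral_mul_const _ hf
      _ ≤ ∫⁻ x in Set.Ioi y,
            ((∫⁻ u in Set.Iio (-1 : ℝ), f u) + ∫⁻ u in Set.Ioo (-1 : ℝ) 0, F x u) * f x := by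
          refine setLIntegral_mono' measurableSet_Ioi fun x hx => ?_
          exact mul_le_mul_left (h1 x hx) _
      _ = (∫⁻ u in Set.Iio (-1 : ℝ), f u) * (∫⁻ x in Set.Ioi y, f x)
            + ∫⁻ x in Set.Ioi y, (∫⁻ u in Set.Ioo (-1 : ℝ) 0, F x u) * f x := by
          simp_rw [add_mul]
          rw [lintegral_add_left (hf.const_mul _), lintegral_const_mul _ hf]
      _ ≤ (∫⁻ u in Set.Iio (-1 : ℝ), f u) * (∫⁻ x in Set.Ioi y, f x)
            + ∫⁻ x in Set.Ioi y, S * ∫⁻ u in Set.Ioo (-1 : ℝ) 0, F x u := by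
          refine add_le_add_right (setLIntegral_mono' measurableSet_Ioi fun x hx => ?_) _
          exact (mul_le_mul_right (le_biSup f hx) _).trans_eq (mul_comm _ _)
      _ = (∫⁻ u in Set.Iio (-1 : ℝ), f u) * (∫⁻ x in Set.Ioi y, f x)
            + S * ∫⁻ x in Set.Ioi y, ∫⁻ u in Set.Ioo (-1 : ℝ) 0, F x u := by
          rw [lintegral_const_mul]
          exact hFmeas.lintegral_prod_right
      _ = (∫⁻ u in Set.Iio (-1 : ℝ), f u) * (∫⁻ x in Set.Ioi y, f x)
            + S * ∫⁻ u in Set.Ioo (-1 : ℝ) 0, ∫⁻ x in Set.Ioi y, F x u := by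
          rw [lintegral_lintegral_swap hFmeas.aemeasurable]
      _ = (∫⁻ u in Set.Iio (-1 : ℝ), f u) * (∫⁻ x in Set.Ioi y, f x)
            + S * ∫⁻ u in Set.Ioo (-1 : ℝ) 0, ENNReal.ofReal (-u) * f u := by
          congr 1
          congr 1
          refine setLIntegral_congr_fun measurableSet_Ioo (fun u hu => ?_)
          have h2 : ∀ x : ℝ, F x u = (Set.Iio (y - u)).indicator (fun _ => f u) x := by
            intro x
            simp only [hF, Set.indicator, Set.mem_Iio]
            by_cases h : u < y - x
            · rw [if_pos h, if_pos (by linarith)]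
            · rw [if_neg h, if_neg (by intro hc; exact h (by linarith))]
          simp_rw [h2]
          rw [lintegral_indicator measurableSet_Iio,
            Measure.restrict_restrict measurableSet_Iio, setLIntegral_const,
            Set.Iio_inter_Ioi, Real.volume_Ioo, mul_comm]
          congr 1
          congr 1
          ring
    rw [add_comm]
  refine ⟨hbound, fun hS' h2 h3 h4 => hbound.trans_lt ?_⟩
  exact ENNReal.add_lt_top.mpr ⟨ENNReal.mul_lt_top hS' h2, ENNReal.mul_lt_top h3 h4⟩
end

section
/- Let k > 0 and let ν : ℝ → ℝ be positive and differentiable at k (so that ν*(x) := e^x ν(x) is differentiable at k with (ν*)′(k) = e^k (ν(k) + ν′(k))). Assume that all the integrals appearing in d₂(k; ·, ·, ν) and d₂(k; ·, ·, ν*) are finite (in particular ∫_{|x|≤1} |x| |e^x − 1| ν(x) dx < ∞). Then for every b, σ ∈ ℝ, a₁(k; b, σ) − a₁(k; b, 0) = (σ²/2) e^k ν(k). That is, a non-zero volatility σ of the Gaussian component increases the second-order coefficient of the call price expansion by exactly (σ²/2) e^k ν(k). -/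
open MeasureTheory Set intervalIntegral

/-- The second-order coefficient `d₂(y; b, σ, ν)` from Figueroa-López & Houdré,
where `ν′(y)` is the derivative of `ν` at `y`. -/
noncomputable def d2 (y b σ : ℝ) (ν : ℝ → ℝ) : ℝ :=
  -σ ^ 2 * deriv ν y + 2 * b * ν y
    - (∫ x in Set.Ioi y, ν x) ^ 2 + (∫ x in Set.Ioo (y / 2) y, ν x) ^ 2
    + 2 * ∫ x in Set.Iio (-(y / 2)), (∫ u in (y - x)..y, ν u) * ν x
    - 2 * ν y * ∫ x in {x : ℝ | y / 2 < |x| ∧ |x| < 1}, x * ν x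
    + 2 * ν y * ∫ x in Set.Ioo (-(y / 2)) (y / 2), (∫ u in (y - x)..y, ν u - ν y) * ν x

/-- The drift under the share measure: `b* = b + ∫_{|x|≤1} x (e^x − 1) ν(x) dx + σ²`. -/
noncomputable def bstar (b σ : ℝ) (ν : ℝ → ℝ) : ℝ :=
  b + (∫ x in Set.Icc (-1 : ℝ) 1, x * (Real.exp x - 1) * ν x) + σ ^ 2

/-- The second-order coefficient of the call-price expansion:
`a₁(k; b, σ) = ½ [ d₂(k; b*, σ, ν*) − e^k d₂(k; b, σ, ν) ]` where `ν*(x) = e^x ν(x)`. -/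
noncomputable def a1 (k b σ : ℝ) (ν : ℝ → ℝ) : ℝ :=
  (1 / 2) * (d2 k (bstar b σ ν) σ (fun x => Real.exp x * ν x) - Real.exp k * d2 k b σ ν)

/-- A non-zero volatility `σ` of the Gaussian component increases the second-order
coefficient of the call-price expansion by exactly `(σ²/2) e^k ν(k)`:
`a₁(k; b, σ) − a₁(k; b, 0) = (σ²/2) e^k ν(k)`. -/
theorem a1_gaussian_component_effect
    (k : ℝ) (hk : 0 < k) (ν : ℝ → ℝ)
    (hνpos : ∀ x, 0 < ν x)
    (hνdiff : DifferentiableAt ℝ ν k)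
    (habs : IntegrableOn (fun x => |x| * |Real.exp x - 1| * ν x) (Set.Icc (-1 : ℝ) 1))
    (hI1 : IntegrableOn ν (Set.Ioi k))
    (hI1s : IntegrableOn (fun x => Real.exp x * ν x) (Set.Ioi k))
    (hI2 : IntegrableOn (fun x => (∫ u in (k - x)..k, ν u) * ν x) (Set.Iio (-(k / 2))))
    (hI2s : IntegrableOn
      (fun x => (∫ u in (k - x)..k, Real.exp u * ν u) * (Real.exp x * ν x))
      (Set.Iio (-(k / 2))))
    (hI3 : IntegrableOn (fun x => x * ν x) {x : ℝ | k / 2 < |x| ∧ |x| < 1})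
    (hI3s : IntegrableOn (fun x => x * (Real.exp x * ν x)) {x : ℝ | k / 2 < |x| ∧ |x| < 1})
    (hI4 : IntegrableOn (fun x => (∫ u in (k - x)..k, ν u - ν k) * ν x)
      (Set.Ioo (-(k / 2)) (k / 2)))
    (hI4s : IntegrableOn
      (fun x => (∫ u in (k - x)..k, Real.exp u * ν u - Real.exp k * ν k) * (Real.exp x * ν x))
      (Set.Ioo (-(k / 2)) (k / 2))) :
    ∀ b σ : ℝ, a1 k b σ ν - a1 k b 0 ν = σ ^ 2 / 2 * Real.exp k * ν k := by
  intro b σ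
  have hd : deriv (fun x => Real.exp x * ν x) k =
      Real.exp k * ν k + Real.exp k * deriv ν k := by
    rw [deriv_fun_mul (Real.differentiable_exp k) hνdiff, Real.deriv_exp]
  simp only [a1, d2, bstar, hd]
  ring
end

section
/- Let C, G, M > 0, Y ∈ (1, 2) and b̂ ∈ ℝ, and let ψ : ℝ → ℂ be the CGMY characteristic exponent ψ(u) := C Γ(−Y) ((M − iu)^Y + (G + iu)^Y − M^Y − G^Y) + i b̂ u, where complex powers are principal-branch powers and Γ is the real Gamma function. Then for every u ∈ ℝ, lim_{t → 0+} t · ψ(u · t^{−1/Y}) = −2 C Γ(−Y) |cos(Yπ/2)| · |u|^Y. (Scaling limit of the CGMY characteristic exponent, the key computation in Proposition 4.1.) -/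
open Filter Topology Complex

/-- The CGMY characteristic exponent
`ψ(u) = C Γ(−Y) ((M − iu)^Y + (G + iu)^Y − M^Y − G^Y) + i b̂ u`
(principal-branch complex powers, `Γ` the real Gamma function). -/
noncomputable def cgmyPsi (C G M Y bhat : ℝ) (u : ℝ) : ℂ :=
  (C * Real.Gamma (-Y) : ℝ) *
      (((M : ℂ) - Complex.I * u) ^ (Y : ℂ) + ((G : ℂ) + Complex.I * u) ^ (Y : ℂ)
        - (M : ℂ) ^ (Y : ℂ) - (G : ℂ) ^ (Y : ℂ))
    + Complex.I * bhat * u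

lemma my_mul_cpow {r : ℝ} (hr : 0 < r) {z : ℂ} (hz : z ≠ 0) (w : ℂ) :
    ((r : ℂ) * z) ^ w = (r : ℂ) ^ w * z ^ w := by
  have hr' : (r : ℂ) ≠ 0 := by exact_mod_cast hr.ne'
  rw [Complex.cpow_def_of_ne_zero (mul_ne_zero hr' hz),
    Complex.cpow_def_of_ne_zero hr', Complex.cpow_def_of_ne_zero hz,
    Complex.log_ofReal_mul hr hz, add_mul, Complex.exp_add,
    Complex.ofReal_log hr.le]

lemma aux_pow (a Y : ℝ) (ha : 0 < a) :
    (-((a:ℂ) * Complex.I)) ^ (Y : ℂ) + ((a:ℂ) * Complex.I) ^ (Y : ℂ)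
      = ((2 * a ^ Y * Real.cos (Y * Real.pi / 2) : ℝ) : ℂ) := by
  have h1 : ((a:ℂ) * Complex.I) ^ (Y:ℂ) = (a:ℂ)^(Y:ℂ) * Complex.I ^ (Y:ℂ) :=
    my_mul_cpow ha Complex.I_ne_zero Y
  have h2 : (-((a:ℂ) * Complex.I)) = (a:ℂ) * (-Complex.I) := by ring
  have h3 : (-((a:ℂ) * Complex.I)) ^ (Y:ℂ) = (a:ℂ)^(Y:ℂ) * (-Complex.I) ^ (Y:ℂ) := by
    rw [h2]; exact my_mul_cpow ha (by simp [Complex.I_ne_zero]) Y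
  have hI : Complex.I ^ (Y:ℂ) = Complex.exp (((Y * Real.pi / 2 : ℝ) : ℂ) * Complex.I) := by
    rw [Complex.cpow_def_of_ne_zero Complex.I_ne_zero, Complex.log_I]
    ring_nf
    push_cast
    ring_nf
  have hnI : (-Complex.I) ^ (Y:ℂ) = Complex.exp (((-(Y * Real.pi / 2) : ℝ) : ℂ) * Complex.I) := by
    rw [Complex.cpow_def_of_ne_zero (by simp [Complex.I_ne_zero]), Complex.log_neg_I]
    ring_nf
    push_cast
    ring_nf
  have haY : ((a:ℂ))^(Y:ℂ) = ((a ^ Y : ℝ) : ℂ) := (Complex.ofReal_cpow ha.le Y).symm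
  rw [h1, h3, hI, hnI, haY, Complex.exp_mul_I, Complex.exp_mul_I]
  push_cast
  simp [Real.cos_neg, Real.sin_neg]
  ring

lemma key_pow {u : ℝ} (hu : u ≠ 0) (Y : ℝ) :
    (-(Complex.I * (u:ℂ))) ^ (Y:ℂ) + (Complex.I * (u:ℂ)) ^ (Y:ℂ)
      = ((2 * |u| ^ Y * Real.cos (Y * Real.pi / 2) : ℝ) : ℂ) := by
  rcases hu.lt_or_gt with h | h
  · have h1 : Complex.I * (u:ℂ) = -(((|u|:ℝ):ℂ) * Complex.I) := by
      rw [abs_of_neg h]; push_cast; ring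
    rw [h1, neg_neg, add_comm]
    exact aux_pow |u| Y (abs_pos.2 hu.symm.symm)
  · have h1 : Complex.I * (u:ℂ) = ((|u|:ℝ):ℂ) * Complex.I := by
      rw [abs_of_pos h]; ring
    rw [h1]
    exact aux_pow |u| Y (abs_pos.2 (ne_of_gt h))

/-- Scaling limit of the CGMY characteristic exponent (key computation of
Proposition 4.1): for `Y ∈ (1,2)`,
`lim_{t→0+} t ψ(u t^{−1/Y}) = −2 C Γ(−Y) |cos(Yπ/2)| |u|^Y`. -/
theorem cgmy_char_exponent_scaling_limit
    (C G M Y bhat : ℝ) (hC : 0 < C) (hG : 0 < G) (hM : 0 < M)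
    (hY : Y ∈ Set.Ioo (1 : ℝ) 2) (u : ℝ) :
    Tendsto (fun t : ℝ => (t : ℂ) * cgmyPsi C G M Y bhat (u * t ^ (-(1 / Y))))
      (𝓝[>] (0 : ℝ))
      (𝓝 ((-2 * C * Real.Gamma (-Y) * |Real.cos (Y * Real.pi / 2)| * |u| ^ Y : ℝ) : ℂ)) := by
  obtain ⟨hY1, hY2⟩ := hY
  have hY0 : (0:ℝ) < Y := by linarith
  have hYne : Y ≠ 0 := hY0.ne'
  rcases eq_or_ne u 0 with rfl | hu
  · have h1 : (fun t : ℝ => (t:ℂ) * cgmyPsi C G M Y bhat ((0:ℝ) * t ^ (-(1/Y))))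
        = fun _ : ℝ => (0:ℂ) := by
      funext t
      simp [cgmyPsi]
    have h2 : ((-2 * C * Real.Gamma (-Y) * |Real.cos (Y * Real.pi / 2)| * |(0:ℝ)| ^ Y : ℝ) : ℂ)
        = 0 := by
      simp [Real.zero_rpow hYne]
    rw [h1, h2]
    exact tendsto_const_nhds
  · set K : ℂ := ((C * Real.Gamma (-Y) : ℝ) : ℂ) with hK
    set g : ℝ → ℂ := fun t =>
      K * ((((t ^ (1/Y) * M : ℝ) : ℂ) - Complex.I * u) ^ (Y:ℂ)
            + (((t ^ (1/Y) * G : ℝ) : ℂ) + Complex.I * u) ^ (Y:ℂ))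
        - (t:ℂ) * (K * ((M:ℂ)^(Y:ℂ) + (G:ℂ)^(Y:ℂ)))
        + (Complex.I * (bhat:ℂ) * (u:ℂ)) * ((t ^ (1 - 1/Y) : ℝ) : ℂ) with hg
    have heq : ∀ᶠ t : ℝ in 𝓝[>] (0:ℝ),
        (t:ℂ) * cgmyPsi C G M Y bhat (u * t ^ (-(1/Y))) = g t := by
      filter_upwards [self_mem_nhdsWithin] with t ht
      have ht : (0:ℝ) < t := ht
      have hs : (0:ℝ) < t ^ (1/Y) := Real.rpow_pos_of_pos ht _
      have hst : t ^ (1/Y) * t ^ (-(1/Y)) = 1 := by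
        rw [← Real.rpow_add ht]; simp
      have hstC : ((t ^ (1/Y) : ℝ):ℂ) * ((t ^ (-(1/Y)) : ℝ):ℂ) = 1 := by
        rw [← Complex.ofReal_mul, hst, Complex.ofReal_one]
      have hre : (t ^ (1/Y)) ^ Y = t := by
        rw [← Real.rpow_mul ht.le, one_div, inv_mul_cancel₀ hYne, Real.rpow_one]
      have htY : (((t ^ (1/Y) : ℝ)):ℂ) ^ (Y:ℂ) = (t:ℂ) := by
        rw [← Complex.ofReal_cpow hs.le, hre]
      have hz1ne : ((M:ℂ) - Complex.I * ((u * t ^ (-(1/Y)) : ℝ) : ℂ)) ≠ 0 := by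
        intro h
        have h2 := congrArg Complex.re h
        simp at h2
        exact hM.ne' h2
      have hz2ne : ((G:ℂ) + Complex.I * ((u * t ^ (-(1/Y)) : ℝ) : ℂ)) ≠ 0 := by
        intro h
        have h2 := congrArg Complex.re h
        simp at h2
        exact hG.ne' h2
      have hc1 : ((t ^ (1/Y) * M : ℝ) : ℂ) - Complex.I * (u:ℂ)
          = ((t ^ (1/Y) : ℝ) : ℂ) * ((M:ℂ) - Complex.I * ((u * t ^ (-(1/Y)) : ℝ) : ℂ)) := by
        push_cast
        linear_combination (Complex.I * (u:ℂ)) * hstC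
      have hc2 : ((t ^ (1/Y) * G : ℝ) : ℂ) + Complex.I * (u:ℂ)
          = ((t ^ (1/Y) : ℝ) : ℂ) * ((G:ℂ) + Complex.I * ((u * t ^ (-(1/Y)) : ℝ) : ℂ)) := by
        push_cast
        linear_combination (-(Complex.I * (u:ℂ))) * hstC
      have hp1 : (t:ℂ) * ((M:ℂ) - Complex.I * ((u * t ^ (-(1/Y)) : ℝ) : ℂ)) ^ (Y:ℂ)
          = (((t ^ (1/Y) * M : ℝ) : ℂ) - Complex.I * (u:ℂ)) ^ (Y:ℂ) := by
        rw [hc1, my_mul_cpow hs hz1ne, htY]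
      have hp2 : (t:ℂ) * ((G:ℂ) + Complex.I * ((u * t ^ (-(1/Y)) : ℝ) : ℂ)) ^ (Y:ℂ)
          = (((t ^ (1/Y) * G : ℝ) : ℂ) + Complex.I * (u:ℂ)) ^ (Y:ℂ) := by
        rw [hc2, my_mul_cpow hs hz2ne, htY]
      have h5 : t * t ^ (-(1/Y)) = t ^ (1 - 1/Y) := by
        rw [show (1 - 1/Y : ℝ) = 1 + -(1/Y) by ring, Real.rpow_add ht, Real.rpow_one]
      have h5C : (t:ℂ) * ((t ^ (-(1/Y)) : ℝ) : ℂ) = ((t ^ (1 - 1/Y) : ℝ) : ℂ) := by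
        rw [← Complex.ofReal_mul, h5]
      have hlt : (t:ℂ) * ((u * t ^ (-(1/Y)) : ℝ) : ℂ)
          = (u:ℂ) * ((t ^ (1 - 1/Y) : ℝ) : ℂ) := by
        push_cast
        linear_combination (u:ℂ) * h5C
      simp only [cgmyPsi, hg, hK]
      linear_combination ((C * Real.Gamma (-Y) : ℝ) : ℂ) * hp1
        + ((C * Real.Gamma (-Y) : ℝ) : ℂ) * hp2 + Complex.I * (bhat:ℂ) * hlt
    rw [tendsto_congr' heq]
    have hpowlim : ∀ p : ℝ, 0 < p → Tendsto (fun t : ℝ => t ^ p) (𝓝[>] (0:ℝ)) (𝓝 0) := by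
      intro p hp
      have h := (Real.continuousAt_rpow_const 0 p (Or.inr hp.le)).tendsto
      rw [Real.zero_rpow hp.ne'] at h
      exact h.mono_left nhdsWithin_le_nhds
    have h1Y : (0:ℝ) < 1/Y := by positivity
    have l1 : Tendsto (fun t : ℝ => ((t ^ (1/Y) * M : ℝ) : ℂ)) (𝓝[>] (0:ℝ)) (𝓝 0) := by
      have h2 := (hpowlim _ h1Y).mul_const M
      rw [zero_mul] at h2
      have h3 := (Complex.continuous_ofReal.tendsto 0).comp h2
      simpa only [Function.comp_def, Complex.ofReal_zero] using h3
    have l1G : Tendsto (fun t : ℝ => ((t ^ (1/Y) * G : ℝ) : ℂ)) (𝓝[>] (0:ℝ)) (𝓝 0) := by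
      have h2 := (hpowlim _ h1Y).mul_const G
      rw [zero_mul] at h2
      have h3 := (Complex.continuous_ofReal.tendsto 0).comp h2
      simpa only [Function.comp_def, Complex.ofReal_zero] using h3
    have lA : Tendsto (fun t : ℝ => ((t ^ (1/Y) * M : ℝ) : ℂ) - Complex.I * u)
        (𝓝[>] (0:ℝ)) (𝓝 (-(Complex.I * u))) := by
      simpa using l1.sub_const (Complex.I * u)
    have lB : Tendsto (fun t : ℝ => ((t ^ (1/Y) * G : ℝ) : ℂ) + Complex.I * u)
        (𝓝[>] (0:ℝ)) (𝓝 (Complex.I * u)) := by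
      simpa using l1G.add_const (Complex.I * u)
    have cA : ContinuousAt (fun z : ℂ => z ^ (Y:ℂ)) (-(Complex.I * u)) :=
      continuousAt_cpow_const (by simp [Complex.mem_slitPlane_iff, hu])
    have cB : ContinuousAt (fun z : ℂ => z ^ (Y:ℂ)) (Complex.I * u) :=
      continuousAt_cpow_const (by simp [Complex.mem_slitPlane_iff, hu])
    have LA := cA.tendsto.comp lA
    have LB := cB.tendsto.comp lB
    have LC : Tendsto (fun t : ℝ => (t:ℂ)) (𝓝[>] (0:ℝ)) (𝓝 0) := by
      have h2 := Complex.continuous_ofReal.tendsto 0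
      simpa using h2.mono_left nhdsWithin_le_nhds
    have LD : Tendsto (fun t : ℝ => ((t ^ (1 - 1/Y) : ℝ) : ℂ)) (𝓝[>] (0:ℝ)) (𝓝 0) := by
      have hp : (0:ℝ) < 1 - 1/Y := by
        have : 1/Y < 1 := by rw [div_lt_one hY0]; exact hY1
        linarith
      have h2 := (Complex.continuous_ofReal.tendsto 0).comp (hpowlim _ hp)
      simpa [Function.comp_def] using h2
    have total := (((LA.add LB).const_mul K).sub
        (LC.mul_const (K * ((M:ℂ)^(Y:ℂ) + (G:ℂ)^(Y:ℂ))))).add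
        (LD.const_mul (Complex.I * (bhat:ℂ) * (u:ℂ)))
    have hcos : Real.cos (Y * Real.pi / 2) ≤ 0 :=
      Real.cos_nonpos_of_pi_div_two_le_of_le (by nlinarith [Real.pi_pos])
        (by nlinarith [Real.pi_pos])
    have hval : ((-2 * C * Real.Gamma (-Y) * |Real.cos (Y * Real.pi / 2)| * |u| ^ Y : ℝ) : ℂ)
        = K * ((-(Complex.I * (u:ℂ))) ^ (Y:ℂ) + (Complex.I * (u:ℂ)) ^ (Y:ℂ))
          - 0 * (K * ((M:ℂ)^(Y:ℂ) + (G:ℂ)^(Y:ℂ)))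
          + (Complex.I * (bhat:ℂ) * (u:ℂ)) * 0 := by
      rw [key_pow hu Y, hK, abs_of_nonpos hcos]
      push_cast
      ring
    rw [hval]
    convert total using 2
    rfl
end

section
/- Let k > 0, a₀ > 0, a₁ ∈ ℝ and c ≥ 0. Let V : (0, t₀) → (0, ∞) satisfy V(t) · log(1/t) → k²/2 as t → 0+. Define V₀(t) := k² / (2 log(1/t)) and V₁(t) := (1/log(1/t)) · log( 4 √π a₀ e^{−k/2} (log(1/t))^{3/2} / k ). Suppose that for every δ > 0 there exists t* > 0 such that for all t ∈ (0, t*): a₀ t + (a₁ − δ) t² ≤ (e^{k/2} V(t)^{3/2} / (√(2π) k²)) · exp(−k²/(2V(t))) · (1 + c V(t)), and (e^{k/2} V(t)^{3/2} / (√(2π) k²)) · exp(−k²/(2V(t))) · (1 − c V(t)) ≤ a₀ t + (a₁ + δ) t². Then lim_{t → 0+} log(1/t) · ( V(t)/V₀(t) − 1 − V₁(t) ) = 0; that is, V(t) = V₀(t) [ 1 + V₁(t) + o(1/log(1/t)) ] as t → 0+. (The second-order implied-variance expansion of Theorem 2.3, extracted from the two-sided sharp Black–Scholes sandwich.) -/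
open Filter Topology

/-- Second-order implied-variance expansion (Theorem 2.3), extracted from the
two-sided sharp Black–Scholes sandwich: with
`V₀(t) = k²/(2 log(1/t))` and
`V₁(t) = log(4√π a₀ e^{−k/2} (log(1/t))^{3/2} / k) / log(1/t)`,
if `V(t) log(1/t) → k²/2` and the call price `a₀ t + a₁ t² + o(t²)` is sandwiched
between `(e^{k/2} V^{3/2}/(√(2π) k²)) e^{−k²/(2V)} (1 ± cV)`, then
`log(1/t) (V(t)/V₀(t) − 1 − V₁(t)) → 0`, i.e.
`V(t) = V₀(t)[1 + V₁(t) + o(1/log(1/t))]` as `t → 0+`. -/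
theorem implied_variance_second_order
    (k a₀ : ℝ) (hk : 0 < k) (ha₀ : 0 < a₀) (a₁ c : ℝ) (hc : 0 ≤ c)
    (t₀ : ℝ) (ht₀ : 0 < t₀)
    (V : ℝ → ℝ) (hVpos : ∀ t, 0 < t → t < t₀ → 0 < V t)
    (hVlim : Tendsto (fun t => V t * Real.log (1 / t)) (𝓝[>] (0 : ℝ)) (𝓝 (k ^ 2 / 2)))
    (hsand : ∀ δ > (0 : ℝ), ∃ tstar > 0, ∀ t, 0 < t → t < tstar → t < t₀ →
      (a₀ * t + (a₁ - δ) * t ^ 2 ≤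
        Real.exp (k / 2) * V t ^ ((3 : ℝ) / 2) / (Real.sqrt (2 * Real.pi) * k ^ 2)
          * Real.exp (-k ^ 2 / (2 * V t)) * (1 + c * V t)) ∧
      (Real.exp (k / 2) * V t ^ ((3 : ℝ) / 2) / (Real.sqrt (2 * Real.pi) * k ^ 2)
          * Real.exp (-k ^ 2 / (2 * V t)) * (1 - c * V t) ≤
        a₀ * t + (a₁ + δ) * t ^ 2)) :
    Tendsto (fun t => Real.log (1 / t) *
        (V t / (k ^ 2 / (2 * Real.log (1 / t))) - 1
          - 1 / Real.log (1 / t) *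
            Real.log (4 * Real.sqrt Real.pi * a₀ * Real.exp (-k / 2)
              * Real.log (1 / t) ^ ((3 : ℝ) / 2) / k)))
      (𝓝[>] (0 : ℝ)) (𝓝 0) := by
  have hπ := Real.pi_pos
  have hk2 : (0:ℝ) < k ^ 2 / 2 := by positivity
  have hC : (0:ℝ) < Real.sqrt (2 * Real.pi) * k ^ 2 := by positivity
  set l : Filter ℝ := 𝓝[>] (0:ℝ) with hl
  -- the function L t = log(1/t)
  set L : ℝ → ℝ := fun t => Real.log (1 / t) with hLdef
  have hL : Tendsto L l atTop := by
    have h1 : Tendsto (fun t : ℝ => t⁻¹) l atTop := tendsto_inv_nhdsGT_zero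
    have h2 := Real.tendsto_log_atTop.comp h1
    apply h2.congr
    intro t; simp [hLdef, Function.comp, one_div]
  have ht0 : Tendsto (fun t : ℝ => t) l (𝓝 0) := tendsto_id.mono_left nhdsWithin_le_nhds
  set e : ℝ → ℝ := fun t => V t * L t / (k ^ 2 / 2) - 1 with hedef
  have he : Tendsto e l (𝓝 0) := by
    have h1 := (hVlim.div_const (k ^ 2 / 2)).sub_const 1
    rw [div_self hk2.ne', sub_self] at h1
    exact h1
  have hV0 : Tendsto V l (𝓝 0) := by
    have h1 : Tendsto (fun t => V t * L t * (L t)⁻¹) l (𝓝 (k ^ 2 / 2 * 0)) :=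
      hVlim.mul hL.inv_tendsto_atTop
    rw [mul_zero] at h1
    apply h1.congr'
    filter_upwards [hL.eventually_ge_atTop 1] with t hLt
    have hLne : L t ≠ 0 := by intro h; rw [h] at hLt; linarith
    rw [mul_assoc, mul_inv_cancel₀ hLne, mul_one]
  -- the sandwich with δ = 1
  obtain ⟨tstar, htstar, hsb⟩ := hsand 1 one_pos
  -- the functions F and g
  set F : ℝ → ℝ := fun t => Real.exp (k / 2) * V t ^ ((3 : ℝ) / 2)
      / (Real.sqrt (2 * Real.pi) * k ^ 2) * Real.exp (-k ^ 2 / (2 * V t)) with hFdef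
  set g : ℝ → ℝ := fun t => Real.log (F t) - Real.log (a₀ * t) with hgdef
  set A : ℝ := 4 * Real.sqrt Real.pi * a₀ * Real.exp (-k / 2) / k with hAdef
  have hA : 0 < A := by rw [hAdef]; positivity
  -- basic eventual facts
  have hev_pos : ∀ᶠ t in l, 0 < t := self_mem_nhdsWithin
  have hev_t : ∀ᶠ t in l, t < min tstar t₀ := ht0.eventually_lt_const (lt_min htstar ht₀)
  have hev_cV : ∀ᶠ t in l, c * V t < 1 / 2 := by
    have : Tendsto (fun t => c * V t) l (𝓝 (c * 0)) := hV0.const_mul c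
    rw [mul_zero] at this
    exact this.eventually_lt_const (by norm_num)
  have hev_m : ∀ᶠ t in l, -(1/2 : ℝ) < (a₁ - 1) * t / a₀ := by
    have : Tendsto (fun t : ℝ => (a₁ - 1) * t / a₀) l (𝓝 ((a₁ - 1) * 0 / a₀)) :=
      (ht0.const_mul _).div_const _
    rw [mul_zero, zero_div] at this
    exact this.eventually_const_lt (by norm_num)
  have hev_p : ∀ᶠ t in l, -(1/2 : ℝ) < (a₁ + 1) * t / a₀ := by
    have : Tendsto (fun t : ℝ => (a₁ + 1) * t / a₀) l (𝓝 ((a₁ + 1) * 0 / a₀)) :=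
      (ht0.const_mul _).div_const _
    rw [mul_zero, zero_div] at this
    exact this.eventually_const_lt (by norm_num)
  have hev_L : ∀ᶠ t in l, 1 ≤ L t := hL.eventually_ge_atTop 1
  -- squeeze: g → 0
  have hg : Tendsto g l (𝓝 0) := by
    have hlo : Tendsto (fun t => Real.log ((1 + (a₁ - 1) * t / a₀) / (1 + c * V t)))
        l (𝓝 0) := by
      have h1 : Tendsto (fun t : ℝ => 1 + (a₁ - 1) * t / a₀) l (𝓝 (1 + (a₁ - 1) * 0 / a₀)) :=
        tendsto_const_nhds.add ((ht0.const_mul _).div_const _)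
      have h2 : Tendsto (fun t : ℝ => 1 + c * V t) l (𝓝 (1 + c * 0)) :=
        tendsto_const_nhds.add (hV0.const_mul c)
      rw [mul_zero, zero_div, add_zero] at h1
      rw [mul_zero, add_zero] at h2
      have h3 := (h1.div h2 one_ne_zero).log (by norm_num)
      simpa using h3
    have hhi : Tendsto (fun t => Real.log ((1 + (a₁ + 1) * t / a₀) / (1 - c * V t)))
        l (𝓝 0) := by
      have h1 : Tendsto (fun t : ℝ => 1 + (a₁ + 1) * t / a₀) l (𝓝 (1 + (a₁ + 1) * 0 / a₀)) :=
        tendsto_const_nhds.add ((ht0.const_mul _).div_const _)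
      have h2 : Tendsto (fun t : ℝ => 1 - c * V t) l (𝓝 (1 - c * 0)) :=
        tendsto_const_nhds.sub (hV0.const_mul c)
      rw [mul_zero, zero_div, add_zero] at h1
      rw [mul_zero, sub_zero] at h2
      have h3 := (h1.div h2 one_ne_zero).log (by norm_num)
      simpa using h3
    refine tendsto_of_tendsto_of_tendsto_of_le_of_le' hlo hhi ?_ ?_
    · -- lower bound
      filter_upwards [hev_pos, hev_t, hev_cV, hev_m] with t htp htm hcV hm
      have htt0 : t < t₀ := lt_of_lt_of_le htm (min_le_right _ _)
      have htts : t < tstar := lt_of_lt_of_le htm (min_le_left _ _)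
      have hVt : 0 < V t := hVpos t htp htt0
      have hrpow : 0 < V t ^ ((3:ℝ)/2) := Real.rpow_pos_of_pos hVt _
      have hF : 0 < F t := by
        rw [hFdef]
        exact mul_pos (div_pos (mul_pos (Real.exp_pos _) hrpow) hC) (Real.exp_pos _)
      obtain ⟨hs1, _⟩ := hsb t htp htts htt0
      have h1c : (0:ℝ) < 1 + c * V t := by nlinarith [mul_nonneg hc hVt.le]
      have hnum : (0:ℝ) < 1 + (a₁ - 1) * t / a₀ := by linarith
      have hat : (0:ℝ) < a₀ * t := mul_pos ha₀ htp
      have key : (1 + (a₁ - 1) * t / a₀) / (1 + c * V t) ≤ F t / (a₀ * t) := by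
        rw [div_le_div_iff₀ h1c hat]
        have hlhs : (1 + (a₁ - 1) * t / a₀) * (a₀ * t) = a₀ * t + (a₁ - 1) * t ^ 2 := by
          field_simp
        rw [hlhs]
        exact hs1
      have hglog : g t = Real.log (F t / (a₀ * t)) := by
        rw [hgdef]; exact (Real.log_div hF.ne' hat.ne').symm
      rw [hglog]
      exact (Real.log_le_log_iff (div_pos hnum h1c) (div_pos hF hat)).mpr key
    · -- upper bound
      filter_upwards [hev_pos, hev_t, hev_cV, hev_p] with t htp htm hcV hp
      have htt0 : t < t₀ := lt_of_lt_of_le htm (min_le_right _ _)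
      have htts : t < tstar := lt_of_lt_of_le htm (min_le_left _ _)
      have hVt : 0 < V t := hVpos t htp htt0
      have hrpow : 0 < V t ^ ((3:ℝ)/2) := Real.rpow_pos_of_pos hVt _
      have hF : 0 < F t := by
        rw [hFdef]
        exact mul_pos (div_pos (mul_pos (Real.exp_pos _) hrpow) hC) (Real.exp_pos _)
      obtain ⟨_, hs2⟩ := hsb t htp htts htt0
      have h1c : (0:ℝ) < 1 - c * V t := by linarith
      have hnum : (0:ℝ) < 1 + (a₁ + 1) * t / a₀ := by linarith
      have hat : (0:ℝ) < a₀ * t := mul_pos ha₀ htp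
      have key : F t / (a₀ * t) ≤ (1 + (a₁ + 1) * t / a₀) / (1 - c * V t) := by
        rw [div_le_div_iff₀ hat h1c]
        have hrhs : (1 + (a₁ + 1) * t / a₀) * (a₀ * t) = a₀ * t + (a₁ + 1) * t ^ 2 := by
          field_simp
        rw [hrhs]
        exact hs2
      have hglog : g t = Real.log (F t / (a₀ * t)) := by
        rw [hgdef]; exact (Real.log_div hF.ne' hat.ne').symm
      rw [hglog]
      exact (Real.log_le_log_iff (div_pos hF hat) (div_pos hnum h1c)).mpr key
  -- the constant identity
  have hlogA : Real.log A = Real.log a₀ + Real.log (Real.sqrt (2 * Real.pi) * k ^ 2)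
      - k / 2 - 3 / 2 * Real.log (k ^ 2 / 2) := by
    have hsqrt2 : Real.sqrt 2 ^ 2 = 2 := Real.sq_sqrt (by norm_num)
    have hs2pos : (0:ℝ) < Real.sqrt 2 := Real.sqrt_pos.mpr (by norm_num)
    have h32 : (k ^ 2 / 2 : ℝ) ^ ((3:ℝ)/2) = k ^ 3 * Real.sqrt 2 / 4 := by
      rw [show ((3:ℝ)/2) = (3:ℕ) * (1/2 : ℝ) by norm_num,
        Real.rpow_mul hk2.le, Real.rpow_natCast, ← Real.sqrt_eq_rpow]
      rw [show ((k ^ 2 / 2) ^ 3 : ℝ) = (k ^ 3 * Real.sqrt 2 / 4) ^ 2 by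
        rw [div_pow, div_pow, mul_pow, hsqrt2]; ring]
      exact Real.sqrt_sq (by positivity)
    have hAeq : A = a₀ * (Real.sqrt (2 * Real.pi) * k ^ 2) * Real.exp (-k / 2)
        / (k ^ 2 / 2) ^ ((3:ℝ)/2) := by
      rw [h32, hAdef]
      rw [show Real.sqrt (2 * Real.pi) = Real.sqrt 2 * Real.sqrt Real.pi from
        Real.sqrt_mul (by norm_num) _]
      rw [div_eq_div_iff hk.ne' (by positivity)]
      ring
    rw [hAeq, Real.log_div (by positivity) (by positivity),
      Real.log_mul (by positivity) (Real.exp_ne_zero _),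
      Real.log_mul ha₀.ne' hC.ne', Real.log_exp, Real.log_rpow hk2]
    ring
  -- the key identity: L e = (1+e)(g + log A + (3/2) log L - (3/2) log(1+e))
  have hI : ∀ᶠ t in l, L t * e t = (1 + e t) *
      (g t + Real.log A + 3 / 2 * Real.log (L t) - 3 / 2 * Real.log (1 + e t)) := by
    filter_upwards [hev_pos, hev_t, hev_L] with t htp htm hLt
    have htt0 : t < t₀ := lt_of_lt_of_le htm (min_le_right _ _)
    have hVt : 0 < V t := hVpos t htp htt0
    have hLpos : 0 < L t := lt_of_lt_of_le one_pos hLt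
    have h1e : 1 + e t = V t * L t / (k ^ 2 / 2) := by rw [hedef]; ring
    have h1epos : 0 < 1 + e t := by rw [h1e]; positivity
    have hVeq : V t = (k ^ 2 / 2) * (1 + e t) / L t := by
      rw [h1e]
      field_simp
    have hlogV : Real.log (V t) = Real.log (k ^ 2 / 2) + Real.log (1 + e t)
        - Real.log (L t) := by
      rw [hVeq, Real.log_div (by positivity) hLpos.ne',
        Real.log_mul hk2.ne' h1epos.ne']
    have hinv : k ^ 2 / (2 * V t) = L t / (1 + e t) := by
      rw [hVeq]
      field_simp
    have hlogF : Real.log (F t) = k / 2 + 3 / 2 * Real.log (V t)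
        - Real.log (Real.sqrt (2 * Real.pi) * k ^ 2) - k ^ 2 / (2 * V t) := by
      rw [hFdef]
      have hrpow : (0:ℝ) < V t ^ ((3:ℝ)/2) := Real.rpow_pos_of_pos hVt _
      rw [Real.log_mul (by positivity) (Real.exp_ne_zero _),
        Real.log_div (by positivity) hC.ne',
        Real.log_mul (Real.exp_ne_zero _) hrpow.ne',
        Real.log_exp, Real.log_exp, Real.log_rpow hVt]
      ring
    have hlogat : Real.log (a₀ * t) = Real.log a₀ - L t := by
      rw [Real.log_mul ha₀.ne' htp.ne', hLdef]
      simp [one_div, Real.log_inv]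
    have hgexp : g t = Real.log (F t) - Real.log (a₀ * t) := by rw [hgdef]
    rw [hgexp, hlogF, hlogV, hlogat, hinv, hlogA]
    have hfrac : (1 + e t) * (L t / (1 + e t)) = L t :=
      mul_div_cancel₀ _ h1epos.ne'
    linear_combination hfrac
  -- auxiliary limits
  have hlog1e : Tendsto (fun t => Real.log (1 + e t)) l (𝓝 0) := by
    have h1 : Tendsto (fun t => 1 + e t) l (𝓝 (1 + 0)) := tendsto_const_nhds.add he
    rw [add_zero] at h1
    simpa using h1.log one_ne_zero
  have hQ : Tendsto (fun t => g t + Real.log A - 3 / 2 * Real.log (1 + e t)) l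
      (𝓝 (Real.log A)) := by
    have := (hg.add_const (Real.log A)).sub (hlog1e.const_mul (3/2))
    simpa using this
  have hlogLL : Tendsto (fun t => Real.log (L t) / L t) l (𝓝 0) := by
    have h1 := (Real.tendsto_pow_log_div_mul_add_atTop 1 0 1 one_ne_zero).comp hL
    simpa [Function.comp_def] using h1
  have hlogLL2 : Tendsto (fun t => Real.log (L t) ^ 2 / L t) l (𝓝 0) := by
    have h1 := (Real.tendsto_pow_log_div_mul_add_atTop 1 0 2 one_ne_zero).comp hL
    simpa [Function.comp_def] using h1
  -- e * log L → 0
  have hElogL : Tendsto (fun t => e t * Real.log (L t)) l (𝓝 0) := by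
    have hrhs : Tendsto (fun t => (1 + e t) *
        ((g t + Real.log A - 3 / 2 * Real.log (1 + e t)) * (Real.log (L t) / L t)
          + 3 / 2 * (Real.log (L t) ^ 2 / L t))) l (𝓝 0) := by
      have h1 : Tendsto (fun t => 1 + e t) l (𝓝 (1 + 0)) := tendsto_const_nhds.add he
      rw [add_zero] at h1
      have h2 := (hQ.mul hlogLL).add (hlogLL2.const_mul (3/2))
      have h3 := h1.mul h2
      simpa using h3
    apply hrhs.congr'
    filter_upwards [hI, hev_L] with t hIt hLt
    have hLpos : 0 < L t := lt_of_lt_of_le one_pos hLt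
    have h4 : e t * Real.log (L t) = (L t * e t) * (Real.log (L t) / L t) := by
      field_simp
    rw [h4, hIt]; ring
  -- final assembly
  have hfinal : Tendsto (fun t => (g t - 3 / 2 * Real.log (1 + e t))
      + e t * (g t + Real.log A - 3 / 2 * Real.log (1 + e t))
      + 3 / 2 * (e t * Real.log (L t))) l (𝓝 0) := by
    have h1 := (hg.sub (hlog1e.const_mul (3/2))).add ((he.mul hQ).add
      (hElogL.const_mul (3/2)))
    simpa [add_assoc] using h1
  apply hfinal.congr'
  filter_upwards [hI, hev_pos, hev_t, hev_L] with t hIt htp htm hLt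
  have htt0 : t < t₀ := lt_of_lt_of_le htm (min_le_right _ _)
  have hVt : 0 < V t := hVpos t htp htt0
  have hLpos : 0 < L t := lt_of_lt_of_le one_pos hLt
  have h1e : 1 + e t = V t * L t / (k ^ 2 / 2) := by rw [hedef]; ring
  have hlogne : Real.log (1 / t) ≠ 0 := ne_of_gt hLpos
  have hratio : V t / (k ^ 2 / (2 * Real.log (1 / t))) = 1 + e t := by
    rw [h1e]
    simp only [hLdef]
    field_simp <;> ring
  have hargeq : 4 * Real.sqrt Real.pi * a₀ * Real.exp (-k / 2)
      * Real.log (1 / t) ^ ((3 : ℝ) / 2) / k = A * L t ^ ((3:ℝ)/2) := by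
    rw [hAdef, hLdef]; ring
  have hlogarg : Real.log (4 * Real.sqrt Real.pi * a₀ * Real.exp (-k / 2)
      * Real.log (1 / t) ^ ((3 : ℝ) / 2) / k)
      = Real.log A + 3 / 2 * Real.log (L t) := by
    rw [hargeq, Real.log_mul hA.ne' (Real.rpow_pos_of_pos hLpos _).ne',
      Real.log_rpow hLpos]
  have hT : Real.log (1 / t) * (V t / (k ^ 2 / (2 * Real.log (1 / t))) - 1
      - 1 / Real.log (1 / t) * Real.log (4 * Real.sqrt Real.pi * a₀ * Real.exp (-k / 2)
        * Real.log (1 / t) ^ ((3 : ℝ) / 2) / k))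
      = L t * e t - Real.log A - 3 / 2 * Real.log (L t) := by
    rw [hratio, hlogarg]
    have hLL : Real.log (1 / t) = L t := rfl
    rw [hLL]
    field_simp <;> ring
  rw [hT, hIt]
  ring
end
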